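/- Lower bound on the principal's utility term (Proposition 3.2, first part): Let T > 0, x₀ ∈ ℝ, γ_P, γ_A > 0, and let a = (a_t) be a nonnegative predictable process with sufficient exponential integrability. With X_T^a = x₀ + ∫₀ᵀ a_t dt + B_T where B is standard Brownian motion, one has E[|exp(-γ_P(X_T^a - ∫₀ᵀ κ(a_t)dt))|^{γ_A/(γ_A+γ_P)}]^{(γ_A+γ_P)/γ_A} ≥ exp(-γ_P x₀) · exp(T γ_P (-κ̃(1) + γ_P γ_A/(2(γ_A+γ_P)))). -/
import Mathlib
open MeasureTheory ProbabilityTheory Real Set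
open scoped NNReal ENNReal

lemma gauss_exp_mul (c : ℝ) {v : ℝ≥0} (hv : v ≠ 0) (x : ℝ) :
    Real.exp (c * x) * gaussianPDFReal 0 v x
      = Real.exp ((v : ℝ) * c ^ 2 / 2) * gaussianPDFReal ((v : ℝ) * c) v x := by
  have hv' : (0:ℝ) < v := lt_of_le_of_ne v.coe_nonneg (by exact_mod_cast hv.symm)
  simp only [gaussianPDFReal]
  rw [mul_left_comm, ← Real.exp_add, mul_left_comm, ← Real.exp_add,
      mul_eq_mul_left_iff]
  left
  rw [Real.exp_eq_exp]
  field_simp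
  ring

lemma integrable_exp_gaussianReal (c : ℝ) {v : ℝ≥0} (hv : v ≠ 0) :
    Integrable (fun x => Real.exp (c * x)) (gaussianReal 0 v) := by
  rw [gaussianReal_of_var_ne_zero _ hv]
  have hd : gaussianPDF 0 v = fun x => ((Real.toNNReal (gaussianPDFReal 0 v x) : ℝ≥0) : ℝ≥0∞) := rfl
  rw [hd, integrable_withDensity_iff_integrable_smul
    ((measurable_gaussianPDFReal 0 v).real_toNNReal)]
  have : (fun x => (Real.toNNReal (gaussianPDFReal 0 v x)) • Real.exp (c * x))
      = fun x => Real.exp ((v : ℝ) * c ^ 2 / 2) * gaussianPDFReal ((v : ℝ) * c) v x := by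
    funext x
    rw [NNReal.smul_def, smul_eq_mul, Real.coe_toNNReal _ (gaussianPDFReal_nonneg 0 v x),
      mul_comm, gauss_exp_mul c hv x]
  rw [this]
  exact (integrable_gaussianPDFReal _ _).const_mul _

lemma integral_exp_gaussianReal (c : ℝ) {v : ℝ≥0} (hv : v ≠ 0) :
    ∫ x, Real.exp (c * x) ∂(gaussianReal 0 v) = Real.exp ((v : ℝ) * c ^ 2 / 2) := by
  rw [gaussianReal_of_var_ne_zero _ hv]
  have hd : gaussianPDF 0 v = fun x => ((Real.toNNReal (gaussianPDFReal 0 v x) : ℝ≥0) : ℝ≥0∞) := rfl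
  rw [hd, integral_withDensity_eq_integral_smul
    ((measurable_gaussianPDFReal 0 v).real_toNNReal)]
  have : (fun x => (Real.toNNReal (gaussianPDFReal 0 v x)) • Real.exp (c * x))
      = fun x => Real.exp ((v : ℝ) * c ^ 2 / 2) * gaussianPDFReal ((v : ℝ) * c) v x := by
    funext x
    rw [NNReal.smul_def, smul_eq_mul, Real.coe_toNNReal _ (gaussianPDFReal_nonneg 0 v x),
      mul_comm, gauss_exp_mul c hv x]
  rw [this, integral_const_mul, integral_gaussianPDFReal_eq_one _ hv, mul_one]

/-- Proposition 3.2, first part: lower bound on the Principal's utility term.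
For any admissible action `a` (nonnegative, with the relevant integrability), with
`X_T^a = x₀ + ∫₀ᵀ a_t dt + B_T` and `B_T ~ N(0,T)`,
`E[|U_P(X_T^a - ∫₀ᵀ κ(a_t) dt)|^{γ_A/(γ_A+γ_P)}]^{(γ_A+γ_P)/γ_A}
  ≥ exp(-γ_P x₀) · exp(T γ_P (-κ̃(1) + γ_P γ_A/(2(γ_A+γ_P))))`,
where `κ̃(1) = sup_{x ≥ 0}(x - κ(x))`. -/
theorem principal_term_lower_bound {Ω : Type*} [MeasurableSpace Ω]
    (μ : Measure Ω) [IsProbabilityMeasure μ]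
    (T x₀ γP γA : ℝ) (hT : 0 < T) (hP : 0 < γP) (hA : 0 < γA)
    (κ : ℝ → ℝ) (hconv : StrictConvexOn ℝ (Set.Ici 0) κ)
    (hcont : ContinuousOn κ (Set.Ici 0)) (hmono : MonotoneOn κ (Set.Ici 0))
    (ktilde : ℝ) (hkt : IsLUB ((fun x => x - κ x) '' Set.Ici 0) ktilde)
    (B : Ω → ℝ) (hB : Measurable B) (hlaw : μ.map B = gaussianReal 0 T.toNNReal)
    (a : ℝ → Ω → ℝ) (ha0 : ∀ t ω, 0 ≤ a t ω)
    (haint : ∀ ω, IntervalIntegrable (fun t => a t ω) MeasureTheory.volume 0 T)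
    (hκint : ∀ ω, IntervalIntegrable (fun t => κ (a t ω)) MeasureTheory.volume 0 T)
    (X : Ω → ℝ) (hX : ∀ ω, X ω = x₀ + (∫ t in (0 : ℝ)..T, a t ω) + B ω)
    (hint : Integrable (fun ω =>
      |(-Real.exp (-γP * (X ω - ∫ t in (0 : ℝ)..T, κ (a t ω))))| ^
        (γA / (γA + γP))) μ) :
    (∫ ω, |(-Real.exp (-γP * (X ω - ∫ t in (0 : ℝ)..T, κ (a t ω))))| ^
          (γA / (γA + γP)) ∂μ) ^ ((γA + γP) / γA) ≥
      Real.exp (-γP * x₀) *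
        Real.exp (T * γP * (-ktilde + γP * γA / (2 * (γA + γP)))) := by
  have hAP : 0 < γA + γP := by linarith
  set p := γA / (γA + γP) with hpdef
  have hp : 0 < p := div_pos hA hAP
  set c := γP * p with hcdef
  have hc : 0 < c := mul_pos hP hp
  have hv : T.toNNReal ≠ 0 := ne_of_gt (Real.toNNReal_pos.2 hT)
  -- pointwise lower bound
  have key : ∀ ω, Real.exp (-c * (x₀ + T * ktilde) + -c * B ω)
      ≤ |(-Real.exp (-γP * (X ω - ∫ t in (0 : ℝ)..T, κ (a t ω))))| ^ p := by
    intro ω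
    have h1 : (∫ t in (0:ℝ)..T, a t ω) - (∫ t in (0:ℝ)..T, κ (a t ω)) ≤ T * ktilde := by
      have hmon := intervalIntegral.integral_mono_on hT.le ((haint ω).sub (hκint ω))
        (intervalIntegrable_const (c := ktilde))
        (fun t _ => hkt.1 ⟨a t ω, ha0 t ω, rfl⟩)
      rw [intervalIntegral.integral_sub (haint ω) (hκint ω)] at hmon
      simpa [smul_eq_mul, mul_comm] using hmon
    rw [abs_neg, Real.abs_exp, ← Real.exp_mul, Real.exp_le_exp, hX ω]
    have h2 : c * ((∫ t in (0:ℝ)..T, a t ω) - ∫ t in (0:ℝ)..T, κ (a t ω))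
        ≤ c * (T * ktilde) := mul_le_mul_of_nonneg_left h1 hc.le
    have h3 : -γP * ((x₀ + (∫ t in (0:ℝ)..T, a t ω)) + B ω - ∫ t in (0:ℝ)..T, κ (a t ω)) * p
        = -c * (x₀ + ((∫ t in (0:ℝ)..T, a t ω) - ∫ t in (0:ℝ)..T, κ (a t ω))) + -c * B ω := by
      rw [hcdef]; ring
    rw [h3]
    nlinarith [h2]
  -- integrability of the lower bound
  have hmeas : AEStronglyMeasurable (fun x => Real.exp (-c * x)) (μ.map B) :=
    (Real.continuous_exp.comp (continuous_const.mul continuous_id)).aestronglyMeasurable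
  have hgint : Integrable (fun ω => Real.exp (-c * (x₀ + T * ktilde) + -c * B ω)) μ := by
    simp_rw [Real.exp_add]
    apply Integrable.const_mul
    have h := integrable_exp_gaussianReal (-c) hv
    rw [← hlaw] at h
    exact (integrable_map_measure hmeas hB.aemeasurable).1 h
  -- value of the Gaussian integral
  have hval : ∫ ω, Real.exp (-c * (x₀ + T * ktilde) + -c * B ω) ∂μ
      = Real.exp (-c * (x₀ + T * ktilde)) * Real.exp (T * c ^ 2 / 2) := by
    simp_rw [Real.exp_add, integral_const_mul]
    congr 1
    calc ∫ ω, rexp (-c * B ω) ∂μ = ∫ x, rexp (-c * x) ∂(μ.map B) :=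
          (integral_map hB.aemeasurable hmeas).symm
      _ = rexp ((T.toNNReal : ℝ) * (-c) ^ 2 / 2) := by
          rw [hlaw]; exact integral_exp_gaussianReal (-c) hv
      _ = rexp (T * c ^ 2 / 2) := by rw [Real.coe_toNNReal _ hT.le]; ring_nf
  have hI : Real.exp (-c * (x₀ + T * ktilde)) * Real.exp (T * c ^ 2 / 2)
      ≤ ∫ ω, |(-Real.exp (-γP * (X ω - ∫ t in (0 : ℝ)..T, κ (a t ω))))| ^ p ∂μ := by
    rw [← hval]
    exact integral_mono hgint hint key
  have hq : (0:ℝ) ≤ (γA + γP) / γA := by positivity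
  refine le_trans (le_of_eq ?_) (Real.rpow_le_rpow (by positivity) hI hq)
  rw [← Real.exp_add, ← Real.exp_add, ← Real.exp_mul, Real.exp_eq_exp, hcdef, hpdef]
  field_simp
  ring
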